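/- With the notation below, the following bracket relations hold: (i) [n3, n3] ⊆ h; (ii) [n2, n3] ⊆ n2; (iii) [n2, n2] ⊆ h ⊕ sp(q) ⊕ n3, where sp(q) denotes the subspace of those Z whose X and Y have only their (2,2) blocks nonzero. -/

import Mathlib

open Matrix

/-- The block (`0` or `1`) to which the index `i ∈ Fin (p + q)` belongs, for row/column
blocks of sizes `p, q`. -/
def blockOf2 (p q : ℕ) (i : Fin (p + q)) : Fin 2 :=
  if (i : ℕ) < p then 0 else 1

/-- The subspace of the compact symplectic Lie algebra `sp(n)`, `n = p + q` (realized as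
`2n × 2n` complex matrices `Z = [[X, −conj Y], [Y, conj X]]` with `X` skew-Hermitian and `Y`
complex symmetric) consisting of those `Z` for which the only possibly nonzero `2 × 2`-blocks
of `X` are the blocks in `SX` and of `Y` are the blocks in `SY` (for row/column block sizes
`p, q`). -/
def spBlockSet2 (p q : ℕ) (SX SY : Set (Fin 2 × Fin 2)) :
    Set (Matrix (Fin (p + q) ⊕ Fin (p + q)) (Fin (p + q) ⊕ Fin (p + q)) ℂ) :=
  { Z | ∃ X Y : Matrix (Fin (p + q)) (Fin (p + q)) ℂ,
      Xᴴ = -X ∧ Yᵀ = Y ∧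
      (∀ i j, X i j ≠ 0 → (blockOf2 p q i, blockOf2 p q j) ∈ SX) ∧
      (∀ i j, Y i j ≠ 0 → (blockOf2 p q i, blockOf2 p q j) ∈ SY) ∧
      Z = Matrix.fromBlocks X (-(Y.map (starRingEnd ℂ))) Y (X.map (starRingEnd ℂ)) }

/-- The subalgebra `h ≅ u(p)`: `Y = 0` and `X` has only its `(1,1)` block nonzero. -/
def hSub (p q : ℕ) := spBlockSet2 p q {(0, 0)} ∅

/-- The subspace `n₂`: `X` and `Y` have only their `(1,2)` and `(2,1)` blocks nonzero. -/
def n2Sub (p q : ℕ) := spBlockSet2 p q {(0, 1), (1, 0)} {(0, 1), (1, 0)}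

/-- The subspace `n₃`: `X = 0` and `Y` has only its `(1,1)` block nonzero (a `p × p`
complex symmetric matrix). -/
def n3Sub (p q : ℕ) := spBlockSet2 p q ∅ {(0, 0)}

/-- The subalgebra `sp(q)`: `X` and `Y` have only their `(2,2)` blocks nonzero. -/
def spqSub (p q : ℕ) := spBlockSet2 p q {(1, 1)} {(1, 1)}

/-- **Bracket relations (3.6).**  (i) `[n₃, n₃] ⊆ h`;  (ii) `[n₂, n₃] ⊆ n₂;
(iii) `[n₂, n₂] ⊆ h ⊕ sp(q) ⊕ n₃`. -/
private abbrev cc := starRingEnd ℂ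

private lemma mapcc {m n : Type*} (M : Matrix m n ℂ) : (M.map cc).map cc = M := by
  ext i j; simp

private lemma exists_mul_ne {n : Type*} [Fintype n] (A B : Matrix n n ℂ) (i j : n)
    (h : (A * B) i j ≠ 0) : ∃ k, A i k ≠ 0 ∧ B k j ≠ 0 := by
  by_contra hc
  push_neg at hc
  apply h
  rw [Matrix.mul_apply]
  apply Finset.sum_eq_zero
  intro k _
  by_cases h0 : A i k = 0
  · simp [h0]
  · simp [hc k h0]

private lemma map_ne {n : Type*} (M : Matrix n n ℂ) (i j : n)
    (h : (M.map cc) i j ≠ 0) : M i j ≠ 0 := by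
  intro h0; rw [Matrix.map_apply, h0] at h; simp at h

private lemma skew_entry {n : Type*} {X : Matrix n n ℂ} (h : Xᴴ = -X) (i j : n) :
    star (X j i) = -X i j := by
  have := congrFun (congrFun h i) j
  simpa [conjTranspose_apply] using this

private lemma symm_mapH {n : Type*} {Y : Matrix n n ℂ} (h : Yᵀ = Y) : (Y.map cc)ᴴ = Y := by
  ext i j
  simp only [conjTranspose_apply, Matrix.map_apply]
  rw [show star (cc (Y j i)) = Y j i by simp]
  exact congrFun (congrFun h i) j

private lemma symm_H {n : Type*} {Y : Matrix n n ℂ} (h : Yᵀ = Y) : Yᴴ = Y.map cc := by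
  ext i j
  simp only [conjTranspose_apply, Matrix.map_apply]
  rw [show Y j i = Yᵀ i j from rfl, h]
  rfl

private lemma skew_mapH {n : Type*} {X : Matrix n n ℂ} (h : Xᴴ = -X) :
    (X.map cc)ᴴ = -(X.map cc) := by
  ext i j
  simp only [conjTranspose_apply, Matrix.map_apply, Matrix.neg_apply]
  rw [show star (cc (X j i)) = X j i by simp,
    show (cc (X i j) : ℂ) = star (X i j) from rfl, skew_entry h j i, neg_neg]

private lemma skew_T {n : Type*} {X : Matrix n n ℂ} (h : Xᴴ = -X) : Xᵀ = -(X.map cc) := by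
  ext i j
  simp only [transpose_apply, Matrix.neg_apply, Matrix.map_apply]
  rw [show (cc (X i j) : ℂ) = star (X i j) from rfl, skew_entry h j i, neg_neg]

private lemma skew_mapT {n : Type*} {X : Matrix n n ℂ} (h : Xᴴ = -X) : (X.map cc)ᵀ = -X := by
  ext i j
  simp only [transpose_apply, Matrix.neg_apply, Matrix.map_apply]
  rw [show (cc (X j i) : ℂ) = star (X j i) from rfl, skew_entry h i j]

private lemma comm_formula {n : ℕ} (X1 Y1 X2 Y2 : Matrix (Fin n) (Fin n) ℂ) :
    (fromBlocks X1 (-(Y1.map cc)) Y1 (X1.map cc)) *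
      (fromBlocks X2 (-(Y2.map cc)) Y2 (X2.map cc)) -
    (fromBlocks X2 (-(Y2.map cc)) Y2 (X2.map cc)) *
      (fromBlocks X1 (-(Y1.map cc)) Y1 (X1.map cc)) =
    fromBlocks
      (X1*X2 - X2*X1 - Y1.map cc * Y2 + Y2.map cc * Y1)
      (-((Y1*X2 - Y2*X1 + X1.map cc * Y2 - X2.map cc * Y1).map cc))
      (Y1*X2 - Y2*X1 + X1.map cc * Y2 - X2.map cc * Y1)
      ((X1*X2 - X2*X1 - Y1.map cc * Y2 + Y2.map cc * Y1).map cc) := by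
  rw [fromBlocks_multiply, fromBlocks_multiply, sub_eq_add_neg, fromBlocks_neg, fromBlocks_add]
  have hsub := Matrix.map_sub (m := Fin n) (n := Fin n) (⇑cc) (by simp)
  have hadd := Matrix.map_add (m := Fin n) (n := Fin n) (⇑cc) (by simp)
  rw [Matrix.fromBlocks_inj]
  refine ⟨by noncomm_ring, ?_, by noncomm_ring, ?_⟩
  · rw [hsub, hadd, hsub, Matrix.map_mul, Matrix.map_mul, Matrix.map_mul, Matrix.map_mul,
      mapcc, mapcc]
    noncomm_ring
  · rw [hadd, hsub, hsub, Matrix.map_mul, Matrix.map_mul, Matrix.map_mul, Matrix.map_mul,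
      mapcc, mapcc]
    noncomm_ring

private lemma comm_mem (p q : ℕ) (S1X S1Y S2X S2Y TX TY : Set (Fin 2 × Fin 2))
    (hXc : ∀ a b c : Fin 2,
      ((a,b) ∈ S1X ∧ (b,c) ∈ S2X) ∨ ((a,b) ∈ S2X ∧ (b,c) ∈ S1X) ∨
      ((a,b) ∈ S1Y ∧ (b,c) ∈ S2Y) ∨ ((a,b) ∈ S2Y ∧ (b,c) ∈ S1Y) → (a,c) ∈ TX)
    (hYc : ∀ a b c : Fin 2,
      ((a,b) ∈ S1Y ∧ (b,c) ∈ S2X) ∨ ((a,b) ∈ S2Y ∧ (b,c) ∈ S1X) ∨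
      ((a,b) ∈ S1X ∧ (b,c) ∈ S2Y) ∨ ((a,b) ∈ S2X ∧ (b,c) ∈ S1Y) → (a,c) ∈ TY)
    {Z W : Matrix (Fin (p + q) ⊕ Fin (p + q)) (Fin (p + q) ⊕ Fin (p + q)) ℂ}
    (hZ : Z ∈ spBlockSet2 p q S1X S1Y) (hW : W ∈ spBlockSet2 p q S2X S2Y) :
    Z * W - W * Z ∈ spBlockSet2 p q TX TY := by
  obtain ⟨X1, Y1, hX1, hY1, sX1, sY1, rfl⟩ := hZ
  obtain ⟨X2, Y2, hX2, hY2, sX2, sY2, rfl⟩ := hW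
  refine ⟨X1*X2 - X2*X1 - Y1.map cc * Y2 + Y2.map cc * Y1,
          Y1*X2 - Y2*X1 + X1.map cc * Y2 - X2.map cc * Y1, ?_, ?_, ?_, ?_,
          comm_formula X1 Y1 X2 Y2⟩
  · simp only [conjTranspose_add, conjTranspose_sub, conjTranspose_mul, hX1, hX2,
      symm_mapH hY1, symm_mapH hY2, symm_H hY1, symm_H hY2]
    noncomm_ring
  · simp only [transpose_add, transpose_sub, transpose_mul, hY1, hY2,
      skew_T hX1, skew_T hX2, skew_mapT hX1, skew_mapT hX2]
    noncomm_ring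
  · intro i j h
    simp only [Matrix.sub_apply, Matrix.add_apply] at h
    have hd : (X1*X2) i j ≠ 0 ∨ (X2*X1) i j ≠ 0 ∨ (Y1.map cc * Y2) i j ≠ 0 ∨
        (Y2.map cc * Y1) i j ≠ 0 := by
      by_contra hc
      push_neg at hc
      obtain ⟨h1, h2, h3, h4⟩ := hc
      simp [h1, h2, h3, h4] at h
    rcases hd with h | h | h | h <;> obtain ⟨k, hk1, hk2⟩ := exists_mul_ne _ _ _ _ h
    · exact hXc _ _ _ (Or.inl ⟨sX1 _ _ hk1, sX2 _ _ hk2⟩)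
    · exact hXc _ _ _ (Or.inr (Or.inl ⟨sX2 _ _ hk1, sX1 _ _ hk2⟩))
    · exact hXc _ _ _ (Or.inr (Or.inr (Or.inl ⟨sY1 _ _ (map_ne _ _ _ hk1), sY2 _ _ hk2⟩)))
    · exact hXc _ _ _ (Or.inr (Or.inr (Or.inr ⟨sY2 _ _ (map_ne _ _ _ hk1), sY1 _ _ hk2⟩)))
  · intro i j h
    simp only [Matrix.sub_apply, Matrix.add_apply] at h
    have hd : (Y1*X2) i j ≠ 0 ∨ (Y2*X1) i j ≠ 0 ∨ (X1.map cc * Y2) i j ≠ 0 ∨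
        (X2.map cc * Y1) i j ≠ 0 := by
      by_contra hc
      push_neg at hc
      obtain ⟨h1, h2, h3, h4⟩ := hc
      simp [h1, h2, h3, h4] at h
    rcases hd with h | h | h | h <;> obtain ⟨k, hk1, hk2⟩ := exists_mul_ne _ _ _ _ h
    · exact hYc _ _ _ (Or.inl ⟨sY1 _ _ hk1, sX2 _ _ hk2⟩)
    · exact hYc _ _ _ (Or.inr (Or.inl ⟨sY2 _ _ hk1, sX1 _ _ hk2⟩))
    · exact hYc _ _ _ (Or.inr (Or.inr (Or.inl ⟨sX1 _ _ (map_ne _ _ _ hk1), sY2 _ _ hk2⟩)))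
    · exact hYc _ _ _ (Or.inr (Or.inr (Or.inr ⟨sX2 _ _ (map_ne _ _ _ hk1), sY1 _ _ hk2⟩)))

private lemma decomp (p q : ℕ)
    {Z : Matrix (Fin (p + q) ⊕ Fin (p + q)) (Fin (p + q) ⊕ Fin (p + q)) ℂ}
    (hZ : Z ∈ spBlockSet2 p q {(0,0),(1,1)} {(0,0),(1,1)}) :
    ∃ A ∈ hSub p q, ∃ B ∈ spqSub p q, ∃ C ∈ n3Sub p q, Z = A + B + C := by
  obtain ⟨X, Y, hX, hY, sX, sY, rfl⟩ := hZ
  set b := blockOf2 p q with hb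
  set XA : Matrix (Fin (p+q)) (Fin (p+q)) ℂ :=
    Matrix.of fun i j => if b i = 0 ∧ b j = 0 then X i j else 0 with hXA
  set XB : Matrix (Fin (p+q)) (Fin (p+q)) ℂ :=
    Matrix.of fun i j => if b i = 0 ∧ b j = 0 then 0 else X i j with hXB
  set YB : Matrix (Fin (p+q)) (Fin (p+q)) ℂ :=
    Matrix.of fun i j => if b i = 0 ∧ b j = 0 then 0 else Y i j with hYB
  set YC : Matrix (Fin (p+q)) (Fin (p+q)) ℂ :=
    Matrix.of fun i j => if b i = 0 ∧ b j = 0 then Y i j else 0 with hYC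
  have hXe := skew_entry hX
  refine ⟨fromBlocks XA (-((0 : Matrix (Fin (p+q)) (Fin (p+q)) ℂ).map cc)) 0 (XA.map cc),
    ⟨XA, 0, ?_, by simp, ?_, by simp, rfl⟩,
    fromBlocks XB (-(YB.map cc)) YB (XB.map cc), ⟨XB, YB, ?_, ?_, ?_, ?_, rfl⟩,
    fromBlocks 0 (-(YC.map cc)) YC ((0 : Matrix (Fin (p+q)) (Fin (p+q)) ℂ).map cc),
    ⟨0, YC, by simp, ?_, by simp, ?_, rfl⟩, ?_⟩
  · -- XAᴴ = -XA
    ext i j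
    simp only [conjTranspose_apply, of_apply, Matrix.neg_apply, hXA, apply_ite star, star_zero]
    by_cases hc : b i = 0 ∧ b j = 0
    · rw [if_pos ⟨hc.2, hc.1⟩, if_pos hc]; exact hXe i j
    · rw [if_neg (fun h => hc ⟨h.2, h.1⟩), if_neg hc]; simp
  · -- XA support
    intro i j h
    simp only [hXA, of_apply, ne_eq, ite_eq_right_iff, not_forall] at h
    obtain ⟨⟨h1, h2⟩, -⟩ := h
    exact Set.mem_singleton_iff.mpr (by rw [show blockOf2 p q i = b i from rfl,
      show blockOf2 p q j = b j from rfl, h1, h2])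
  · -- XBᴴ = -XB
    ext i j
    simp only [conjTranspose_apply, of_apply, Matrix.neg_apply, hXB, apply_ite star, star_zero]
    by_cases hc : b i = 0 ∧ b j = 0
    · rw [if_pos ⟨hc.2, hc.1⟩, if_pos hc]; simp
    · rw [if_neg (fun h => hc ⟨h.2, h.1⟩), if_neg hc]; exact hXe i j
  · -- YBᵀ = YB
    ext i j
    simp only [transpose_apply, of_apply, hYB]
    by_cases hc : b i = 0 ∧ b j = 0
    · rw [if_pos ⟨hc.2, hc.1⟩, if_pos hc]
    · rw [if_neg (fun h => hc ⟨h.2, h.1⟩), if_neg hc]; exact congrFun (congrFun hY i) j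
  · -- XB support
    intro i j h
    simp only [hXB, of_apply, ne_eq, ite_eq_right_iff, not_forall] at h
    by_cases hc : b i = 0 ∧ b j = 0
    · simp [hc] at h
    · have hXne : X i j ≠ 0 := by
        intro h0; rw [if_neg hc, h0] at h; exact h rfl
      have := sX i j hXne
      simp only [Set.mem_insert_iff, Set.mem_singleton_iff, Prod.mk.injEq] at this ⊢
      rcases this with ⟨h1, h2⟩ | ⟨h1, h2⟩
      · exact absurd ⟨h1, h2⟩ hc
      · exact ⟨h1, h2⟩
  · -- YB support
    intro i j h
    by_cases hc : b i = 0 ∧ b j = 0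
    · simp [hYB, hc] at h
    · have hYne : Y i j ≠ 0 := by
        intro h0; apply h; simp [hYB, h0]
      have := sY i j hYne
      simp only [Set.mem_insert_iff, Set.mem_singleton_iff, Prod.mk.injEq] at this ⊢
      rcases this with ⟨h1, h2⟩ | ⟨h1, h2⟩
      · exact absurd ⟨h1, h2⟩ hc
      · exact ⟨h1, h2⟩
  · -- YCᵀ = YC
    ext i j
    simp only [transpose_apply, of_apply, hYC]
    by_cases hc : b i = 0 ∧ b j = 0
    · rw [if_pos ⟨hc.2, hc.1⟩, if_pos hc]; exact congrFun (congrFun hY i) j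
    · rw [if_neg (fun h => hc ⟨h.2, h.1⟩), if_neg hc]
  · -- YC support
    intro i j h
    simp only [hYC, of_apply, ne_eq, ite_eq_right_iff, not_forall] at h
    obtain ⟨⟨h1, h2⟩, -⟩ := h
    exact Set.mem_singleton_iff.mpr (by rw [show blockOf2 p q i = b i from rfl,
      show blockOf2 p q j = b j from rfl, h1, h2])
  · -- the sum
    rw [fromBlocks_add, fromBlocks_add, Matrix.fromBlocks_inj]
    have hXsum : X = XA + XB := by
      ext i j
      simp only [Matrix.add_apply, hXA, hXB, of_apply]
      split <;> simp
    have hYsum : Y = YB + YC := by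
      ext i j
      simp only [Matrix.add_apply, hYB, hYC, of_apply]
      split <;> simp
    refine ⟨?_, ?_, ?_, ?_⟩
    · rw [hXsum]; abel
    · ext i j
      simp only [Matrix.add_apply, Matrix.neg_apply, Matrix.map_apply, Matrix.zero_apply, hYB, hYC,
        of_apply, apply_ite cc, map_zero]
      split <;> simp
    · rw [hYsum]; abel
    · ext i j
      simp only [Matrix.add_apply, Matrix.map_apply, Matrix.zero_apply, hXA, hXB,
        of_apply, apply_ite cc, map_zero]
      split <;> simp


theorem bracket_relations_flag (p q : ℕ) (hp : 1 ≤ p) (hq : 1 ≤ q) :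
    (∀ Z ∈ n3Sub p q, ∀ W ∈ n3Sub p q, Z * W - W * Z ∈ hSub p q) ∧
    (∀ Z ∈ n2Sub p q, ∀ W ∈ n3Sub p q, Z * W - W * Z ∈ n2Sub p q) ∧
    (∀ Z ∈ n2Sub p q, ∀ W ∈ n2Sub p q,
      ∃ A ∈ hSub p q, ∃ B ∈ spqSub p q, ∃ C ∈ n3Sub p q, Z * W - W * Z = A + B + C) := by
  refine ⟨?_, ?_, ?_⟩
  · intro Z hZ W hW
    exact comm_mem p q _ _ _ _ _ _
      (by simp only [Set.mem_empty_iff_false, Set.mem_singleton_iff, Prod.mk.injEq]; decide)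
      (by simp only [Set.mem_empty_iff_false, Set.mem_singleton_iff, Prod.mk.injEq]; decide)
      hZ hW
  · intro Z hZ W hW
    exact comm_mem p q _ _ _ _ _ _
      (by simp only [Set.mem_empty_iff_false, Set.mem_singleton_iff, Set.mem_insert_iff,
        Prod.mk.injEq]; decide)
      (by simp only [Set.mem_empty_iff_false, Set.mem_singleton_iff, Set.mem_insert_iff,
        Prod.mk.injEq]; decide)
      hZ hW
  · intro Z hZ W hW
    exact decomp p q (comm_mem p q _ _ _ _ _ _
      (by simp only [Set.mem_singleton_iff, Set.mem_insert_iff, Prod.mk.injEq]; decide)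
      (by simp only [Set.mem_singleton_iff, Set.mem_insert_iff, Prod.mk.injEq]; decide)
      hZ hW)
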